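/- arXiv:2301.00791 — 2 statements merged into one kernel-verified Lean document; each statement's English description precedes it below -/
import Mathlib

section
/- Let p be a prime, d ≥ 1 an integer, q = p^d, and R = W(𝔽_q). For every partition λ, the second exterior power ⋀²_R N_λ of the R-module N_λ = ⊕_j R/(p^{λ_j} R), taken over R, is a finite R-module of cardinality q^{∑_j (j−1)λ_j}. -/
open scoped BigOperators DirectSum TensorProduct

/-- `R = W(𝔽_q)`, `q = p^d`, realized as the Witt vectors of the field with `p^d`
elements. -/
abbrev Rw (p : ℕ) [Fact p.Prime] (d : ℕ) : Type := WittVector p (GaloisField p d)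

/-- `N_μ = ⊕_j R/(p^{μ_j} R)` (`0`-based indexing: `μ j = μ_{j+1}`). -/
noncomputable abbrev Nmod (p : ℕ) [Fact p.Prime] (d : ℕ) (μ : ℕ → ℕ) : Type :=
  ⨁ j : ℕ, (Rw p d) ⧸ (Ideal.span {(p : Rw p d) ^ (μ j)})

/-- `⋀²_R M`: the quotient of `M ⊗_R M` by the submodule generated by the elements
`m ⊗ m`. -/
noncomputable abbrev Lambda2 (R : Type*) [CommRing R] (M : Type*) [AddCommGroup M]
    [Module R M] : Type _ :=
  (M ⊗[R] M) ⧸ Submodule.span R {x : M ⊗[R] M | ∃ m : M, x = m ⊗ₜ[R] m}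


namespace WittAux

variable (p : ℕ) [hp : Fact p.Prime] {k : Type*} [Field k] [CharP k p] [PerfectRing k p]

theorem versch_mul_p (w : WittVector p k) :
    WittVector.verschiebung w * (p : WittVector p k)
      = WittVector.verschiebung (w * (p : WittVector p k)) := by
  conv_lhs => rw [← WittVector.verschiebung_frobenius (WittVector.verschiebung w)]
  rw [WittVector.frobenius_verschiebung]

theorem iterate_versch_mul_p (m : ℕ) (w : WittVector p k) :
    WittVector.verschiebung^[m] w * (p : WittVector p k)
      = WittVector.verschiebung^[m] (w * (p : WittVector p k)) := by
  induction m generalizing w with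
  | zero => simp
  | succ m ih =>
    rw [Function.iterate_succ_apply, Function.iterate_succ_apply, ih, versch_mul_p]

theorem pow_mul_eq (n : ℕ) (y : WittVector p k) :
    (p : WittVector p k) ^ n * y =
      WittVector.verschiebung^[n] (WittVector.frobenius^[n] y) := by
  induction n generalizing y with
  | zero => simp
  | succ m ih =>
    calc (p : WittVector p k) ^ (m+1) * y
        = (p : WittVector p k) ^ m * y * (p : WittVector p k) := by ring
    _ = WittVector.verschiebung^[m] (WittVector.frobenius^[m] y) * (p : WittVector p k) := by
        rw [ih]
    _ = WittVector.verschiebung^[m] (WittVector.frobenius^[m] y * (p : WittVector p k)) :=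
        iterate_versch_mul_p p m _
    _ = WittVector.verschiebung^[m]
          (WittVector.verschiebung (WittVector.frobenius (WittVector.frobenius^[m] y))) := by
        rw [WittVector.verschiebung_frobenius]
    _ = _ := by
        rw [← Function.iterate_succ_apply' (⇑WittVector.frobenius),
          ← Function.iterate_succ_apply (⇑WittVector.verschiebung)]

theorem iterate_versch_coeff_lt (n : ℕ) (x : WittVector p k) {i : ℕ} (hi : i < n) :
    (WittVector.verschiebung^[n] x).coeff i = 0 := by
  induction n generalizing i with
  | zero => omega
  | succ m ih =>
    rw [Function.iterate_succ_apply']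
    cases i with
    | zero => exact WittVector.verschiebung_coeff_zero _
    | succ j =>
      rw [WittVector.verschiebung_coeff_succ]
      exact ih (by omega)

theorem mem_span_pow_iff (n : ℕ) (x : WittVector p k) :
    x ∈ Ideal.span {(p : WittVector p k) ^ n} ↔ ∀ i < n, x.coeff i = 0 := by
  rw [Ideal.mem_span_singleton]
  constructor
  · rintro ⟨y, rfl⟩ i hi
    rw [pow_mul_eq]
    exact iterate_versch_coeff_lt p n _ hi
  · intro h
    obtain ⟨z, hz⟩ := (WittVector.frobenius_bijective p k).surjective.iterate n (x.shift n)
    refine ⟨z, ?_⟩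
    rw [pow_mul_eq, hz, ← WittVector.eq_iterate_verschiebung h]

theorem span_pow_eq_ker (n : ℕ) :
    Ideal.span {(p : WittVector p k) ^ n}
      = RingHom.ker (WittVector.truncate (p := p) (R := k) n) := by
  ext x
  rw [mem_span_pow_iff, WittVector.mem_ker_truncate]

noncomputable def quotEquiv (n : ℕ) :
    (WittVector p k ⧸ Ideal.span {(p : WittVector p k) ^ n})
      ≃+* TruncatedWittVector p n k := by
  rw [span_pow_eq_ker]
  exact RingHom.quotientKerEquivOfSurjective (WittVector.truncate_surjective p n k)

theorem card_quot (n : ℕ) [Fintype k] :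
    Nat.card (WittVector p k ⧸ Ideal.span {(p : WittVector p k) ^ n})
      = Fintype.card k ^ n := by
  have : Finite (TruncatedWittVector p n k) := by
    unfold TruncatedWittVector; infer_instance
  rw [Nat.card_congr (quotEquiv p n).toEquiv, Nat.card_eq_fintype_card,
    TruncatedWittVector.card]

theorem finite_quot (n : ℕ) [Finite k] :
    Finite (WittVector p k ⧸ Ideal.span {(p : WittVector p k) ^ n}) := by
  haveI := Fintype.ofFinite k
  have : Finite (TruncatedWittVector p n k) := by
    unfold TruncatedWittVector; infer_instance
  exact Finite.of_equiv _ (quotEquiv p n).symm.toEquiv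

end WittAux


namespace Stmt16Aux

variable (p : ℕ) [Fact p.Prime] (d : ℕ) (l : ℕ → ℕ)

abbrev Q (j : ℕ) : Type := Rw p d ⧸ (Ideal.span {(p : Rw p d) ^ (l j)})

noncomputable def E (i : ℕ) : Nmod p d l :=
  DirectSum.lof (Rw p d) ℕ (fun j => Q p d l j) i 1

/-- projection `Q i → Q j` when `l j ≤ l i`. -/
noncomputable def pr (i j : ℕ) (h : l j ≤ l i) : Q p d l i →ₗ[Rw p d] Q p d l j :=
  Submodule.mapQ _ _ LinearMap.id (by
    simpa using Ideal.span_singleton_le_span_singleton.mpr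
      (pow_dvd_pow (p : Rw p d) h))

variable (N : ℕ) (hl : ∀ i j : ℕ, i ≤ j → l j ≤ l i)

noncomputable abbrev T : Type :=
  (j : Fin N) → Fin (j : ℕ) → Q p d l j

noncomputable def B : Nmod p d l →ₗ[Rw p d] Nmod p d l →ₗ[Rw p d] T p d l N :=
  LinearMap.mk₂ (Rw p d)
    (fun x y => fun j i =>
      pr p d l i j (hl i j (le_of_lt i.2)) (x i) * y j
        - pr p d l i j (hl i j (le_of_lt i.2)) (y i) * x j)
    (by
      intro x x' y
      funext j i
      simp only [DirectSum.add_apply, map_add, Pi.add_apply]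
      ring)
    (by
      intro r x y
      funext j i
      simp only [DirectSum.smul_apply, map_smul, Pi.smul_apply]
      simp [smul_sub, Algebra.smul_mul_assoc, Algebra.mul_smul_comm])
    (by
      intro x y y'
      funext j i
      simp only [DirectSum.add_apply, map_add, Pi.add_apply]
      ring)
    (by
      intro r x y
      funext j i
      simp only [DirectSum.smul_apply, map_smul, Pi.smul_apply]
      simp [smul_sub, Algebra.smul_mul_assoc, Algebra.mul_smul_comm])


noncomputable def phi : (Nmod p d l ⊗[Rw p d] Nmod p d l) →ₗ[Rw p d] T p d l N :=
  TensorProduct.lift (B p d l N hl)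

theorem phi_tmul (x y : Nmod p d l) (j : Fin N) (i : Fin (j : ℕ)) :
    phi p d l N hl (x ⊗ₜ y) j i =
      pr p d l i j (hl i j (le_of_lt i.2)) (x i) * y j
        - pr p d l i j (hl i j (le_of_lt i.2)) (y i) * x j := by
  simp [phi, B]

theorem phi_diag (m : Nmod p d l) : phi p d l N hl (m ⊗ₜ m) = 0 := by
  funext j i
  rw [phi_tmul, sub_self]
  rfl

noncomputable abbrev sp : Submodule (Rw p d) (Nmod p d l ⊗[Rw p d] Nmod p d l) :=
  Submodule.span (Rw p d) {x | ∃ m : Nmod p d l, x = m ⊗ₜ[Rw p d] m}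

noncomputable def phibar : Lambda2 (Rw p d) (Nmod p d l) →ₗ[Rw p d] T p d l N :=
  Submodule.liftQ (Submodule.span (Rw p d) {x : Nmod p d l ⊗[Rw p d] Nmod p d l | ∃ m : Nmod p d l, x = m ⊗ₜ[Rw p d] m}) (phi p d l N hl) (by
    rw [Submodule.span_le]
    rintro _ ⟨m, rfl⟩
    exact LinearMap.mem_ker.mpr (phi_diag p d l N hl m))

theorem phibar_mk (w : Nmod p d l ⊗[Rw p d] Nmod p d l) :
    phibar p d l N hl (Submodule.Quotient.mk w) = phi p d l N hl w := rfl

/-- the class of `E i ⊗ E j` in `Λ²`. -/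
noncomputable def bEl (i j : ℕ) : Lambda2 (Rw p d) (Nmod p d l) :=
  Submodule.Quotient.mk (E p d l i ⊗ₜ[Rw p d] E p d l j)

theorem one_def (j : ℕ) : (1 : Q p d l j) = Submodule.Quotient.mk 1 := rfl

theorem pr_mk (i j : ℕ) (h : l j ≤ l i) (x : Rw p d) :
    pr p d l i j h (Submodule.Quotient.mk x) = Submodule.Quotient.mk x := by
  rw [pr, Submodule.mapQ_apply]
  rfl

theorem smul_E (j : ℕ) : (p : Rw p d) ^ (l j) • E p d l j = 0 := by
  rw [E, ← map_smul]
  convert map_zero (DirectSum.lof (Rw p d) ℕ (fun j => Q p d l j) j) using 2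
  rw [one_def, ← Submodule.Quotient.mk_smul, smul_eq_mul, mul_one,
    Submodule.Quotient.mk_eq_zero]
  exact Ideal.subset_span rfl

noncomputable def psiC (j : Fin N) (i : Fin (j : ℕ)) :
    Q p d l j →ₗ[Rw p d] Lambda2 (Rw p d) (Nmod p d l) :=
  Submodule.liftQ _ (LinearMap.toSpanSingleton (Rw p d) _ (bEl p d l i j)) (by
    rw [Ideal.span_le]
    rintro _ rfl
    rw [SetLike.mem_coe, LinearMap.mem_ker, LinearMap.toSpanSingleton_apply, bEl,
      ← Submodule.Quotient.mk_smul, ← TensorProduct.tmul_smul, smul_E]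
    simp)

theorem psiC_mk (j : Fin N) (i : Fin (j : ℕ)) (r : Rw p d) :
    psiC p d l N j i (Submodule.Quotient.mk r) = r • bEl p d l i j := rfl

noncomputable def psi : T p d l N →ₗ[Rw p d] Lambda2 (Rw p d) (Nmod p d l) where
  toFun t := ∑ j : Fin N, ∑ i : Fin (j : ℕ), psiC p d l N j i (t j i)
  map_add' a b := by
    simp [Pi.add_apply, map_add, Finset.sum_add_distrib]
  map_smul' r a := by
    simp [Pi.smul_apply, map_smul, Finset.smul_sum]

theorem psi_apply (t : T p d l N) :
    psi p d l N t = ∑ j : Fin N, ∑ i : Fin (j : ℕ), psiC p d l N j i (t j i) := rfl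


theorem E_apply_self (i : ℕ) : E p d l i i = 1 :=
  DirectSum.lof_apply _ _ _

theorem E_apply_ne {i j : ℕ} (h : i ≠ j) : E p d l i j = 0 := by
  rw [E, DirectSum.lof_eq_of, DirectSum.of_eq_of_ne _ _ _ h.symm]

theorem phibar_psiC (j : Fin N) (i : Fin (j : ℕ)) (q : Q p d l j) :
    phibar p d l N hl (psiC p d l N j i q) = Pi.single j (Pi.single i q) := by
  obtain ⟨r, rfl⟩ := Submodule.Quotient.mk_surjective _ q
  rw [psiC_mk, map_smul, bEl, phibar_mk]
  funext j' i'
  rw [Pi.smul_apply, Pi.smul_apply, phi_tmul]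
  by_cases hj : j' = j
  · subst hj
    by_cases hi : i' = i
    · subst hi
      rw [E_apply_self, E_apply_self, E_apply_ne p d l (Nat.ne_of_lt i'.2),
        E_apply_ne p d l (Nat.ne_of_gt i'.2), one_def, pr_mk, ← one_def, one_mul,
        map_zero, zero_mul, sub_zero, Pi.single_eq_same, Pi.single_eq_same, one_def,
        ← Submodule.Quotient.mk_smul, smul_eq_mul, mul_one]
    · have hvi : (i' : ℕ) ≠ (i : ℕ) := fun h => hi (Fin.ext h)
      rw [E_apply_ne p d l (fun h => hvi h.symm),
        E_apply_ne p d l (Nat.ne_of_gt i'.2),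
        map_zero, zero_mul, zero_mul, sub_zero,
        Pi.single_eq_same, Pi.single_eq_of_ne hi, smul_zero]
  · have hvj : (j' : ℕ) ≠ (j : ℕ) := fun h => hj (Fin.ext h)
    have h1 : E p d l (j : ℕ) (j' : ℕ) = 0 := E_apply_ne p d l (fun h => hvj h.symm)
    rw [h1, mul_zero, zero_sub]
    by_cases hib : (i' : ℕ) = (j : ℕ)
    · have : E p d l (i : ℕ) (j' : ℕ) = 0 := by
        refine E_apply_ne p d l (fun h => ?_)
        have h2 := i.2
        have h3 := i'.2
        omega
      rw [this, mul_zero, neg_zero, Pi.single_eq_of_ne hj, Pi.zero_apply, smul_zero]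
    · rw [E_apply_ne p d l (fun h => hib h.symm), map_zero, zero_mul, neg_zero,
        Pi.single_eq_of_ne hj, Pi.zero_apply, smul_zero]


theorem psi_single (j : Fin N) (i : Fin (j : ℕ)) (q : Q p d l j) :
    psi p d l N (Pi.single j (Pi.single i q)) = psiC p d l N j i q := by
  rw [psi_apply, Finset.sum_eq_single j]
  · rw [Finset.sum_eq_single i]
    · rw [Pi.single_eq_same, Pi.single_eq_same]
    · intro i' _ hne
      rw [Pi.single_eq_same, Pi.single_eq_of_ne hne, map_zero]
    · simp
  · intro j' _ hne
    simp [Pi.single_eq_of_ne hne]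
  · simp

theorem left_inv (t : T p d l N) : phibar p d l N hl (psi p d l N t) = t := by
  rw [psi_apply, map_sum]
  simp_rw [map_sum, phibar_psiC]
  conv_rhs => rw [← Finset.univ_sum_single t]
  refine Finset.sum_congr rfl fun j _ => ?_
  have h2 : (Pi.single j (t j) : T p d l N)
      = Pi.single j (∑ i : Fin (j : ℕ), Pi.single i (t j i)) := by
    rw [Finset.univ_sum_single]
  rw [h2]
  exact (map_sum
    (LinearMap.single (Rw p d) (fun j : Fin N => (Fin (j : ℕ) → Q p d l j)) j)
    (fun i : Fin (j : ℕ) => Pi.single i (t j i)) Finset.univ).symm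

theorem swap_mem (x y : Nmod p d l) :
    x ⊗ₜ[Rw p d] y + y ⊗ₜ[Rw p d] x ∈ sp p d l := by
  have h : x ⊗ₜ[Rw p d] y + y ⊗ₜ[Rw p d] x
      = (x + y) ⊗ₜ[Rw p d] (x + y) - x ⊗ₜ[Rw p d] x - y ⊗ₜ[Rw p d] y := by
    simp [TensorProduct.tmul_add, TensorProduct.add_tmul]
    abel
  rw [h]
  have hs : ∀ m : Nmod p d l, m ⊗ₜ[Rw p d] m ∈ sp p d l := fun m =>
    Submodule.subset_span (R := Rw p d)
      (s := {x : Nmod p d l ⊗[Rw p d] Nmod p d l | ∃ m : Nmod p d l, x = m ⊗ₜ[Rw p d] m}) ⟨m, rfl⟩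
  rw [sub_eq_add_neg, sub_eq_add_neg, ← neg_one_smul (Rw p d) (x ⊗ₜ[Rw p d] x),
    ← neg_one_smul (Rw p d) (y ⊗ₜ[Rw p d] y)]
  exact add_mem (add_mem (hs _) (Submodule.smul_mem _ _ (hs _))) (Submodule.smul_mem _ _ (hs _))

theorem mk_swap (x y : Nmod p d l) :
    (Submodule.Quotient.mk (x ⊗ₜ[Rw p d] y) : Lambda2 (Rw p d) (Nmod p d l))
      = - Submodule.Quotient.mk (y ⊗ₜ[Rw p d] x) := by
  rw [eq_neg_iff_add_eq_zero, ← Submodule.Quotient.mk_add, Submodule.Quotient.mk_eq_zero]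
  exact swap_mem p d l x y

theorem E_zero (hN : ∀ i, N ≤ i → l i = 0) {j : ℕ} (hj : N ≤ j) : E p d l j = 0 := by
  have h1 : (1 : Q p d l j) = 0 := by
    rw [one_def, Submodule.Quotient.mk_eq_zero, hN j hj]
    simp [Ideal.mem_span_singleton]
  rw [E, h1, map_zero]

theorem of_mk (i : ℕ) (r : Rw p d) :
    DirectSum.of (fun j => Q p d l j) i (Submodule.Quotient.mk r) = r • E p d l i := by
  rw [E, ← map_smul, DirectSum.lof_eq_of]
  congr 1
  rw [one_def, ← Submodule.Quotient.mk_smul, smul_eq_mul, mul_one]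

theorem bEl_lt_mem (hN : ∀ i, N ≤ i → l i = 0) (i j : ℕ) (hij : i < j) :
    bEl p d l i j ∈ LinearMap.range (psi p d l N) := by
  by_cases hj : j < N
  · have h1 : bEl p d l i j
        = psiC p d l N ⟨j, hj⟩ ⟨i, hij⟩ (1 : Q p d l j) := by
      rw [one_def, psiC_mk, one_smul]
    rw [h1, ← psi_single]
    exact LinearMap.mem_range_self _ _
  · have h0 : E p d l j = 0 := E_zero p d l N hN (by omega)
    rw [bEl, h0]
    simp

theorem bEl_mem (hN : ∀ i, N ≤ i → l i = 0) (i j : ℕ) :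
    bEl p d l i j ∈ LinearMap.range (psi p d l N) := by
  rcases lt_trichotomy i j with h | h | h
  · exact bEl_lt_mem p d l N hN i j h

  · subst h
    have : bEl p d l i i = 0 := by
      rw [bEl, Submodule.Quotient.mk_eq_zero]
      exact Submodule.subset_span ⟨_, rfl⟩
    rw [this]; exact zero_mem _
  · rw [bEl, mk_swap]
    exact neg_mem (bEl_lt_mem p d l N hN j i h)

theorem psi_surj (hN : ∀ i, N ≤ i → l i = 0) : Function.Surjective (psi p d l N) := by
  intro z
  obtain ⟨w, rfl⟩ := Submodule.Quotient.mk_surjective _ z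
  suffices h : (Submodule.Quotient.mk w : Lambda2 (Rw p d) (Nmod p d l))
      ∈ LinearMap.range (psi p d l N) from h
  induction w using TensorProduct.induction_on with
  | zero => simp
  | add u v hu hv =>
    rw [Submodule.Quotient.mk_add]
    exact add_mem hu hv
  | tmul x y =>
    induction x using DirectSum.induction_on with
    | zero => simp [TensorProduct.zero_tmul]
    | add u v hu hv =>
      rw [TensorProduct.add_tmul, Submodule.Quotient.mk_add]
      exact add_mem hu hv
    | of i a =>
      induction y using DirectSum.induction_on with
      | zero => simp [TensorProduct.tmul_zero]
      | add u v hu hv =>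
        rw [TensorProduct.tmul_add, Submodule.Quotient.mk_add]
        exact add_mem hu hv
      | of j b =>
        obtain ⟨r, rfl⟩ := Submodule.Quotient.mk_surjective _ a
        obtain ⟨s, rfl⟩ := Submodule.Quotient.mk_surjective _ b
        rw [of_mk, of_mk]
        have heq : (r • E p d l i) ⊗ₜ[Rw p d] (s • E p d l j)
            = r • s • (E p d l i ⊗ₜ[Rw p d] E p d l j) := by
          rw [TensorProduct.smul_tmul_smul, mul_comm, mul_smul]
          rw [smul_comm]
        rw [heq, Submodule.Quotient.mk_smul, Submodule.Quotient.mk_smul]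
        exact Submodule.smul_mem _ _ (Submodule.smul_mem _ _ (bEl_mem p d l N hN i j))


noncomputable def equivTL (hN : ∀ i, N ≤ i → l i = 0) :
    T p d l N ≃ₗ[Rw p d] Lambda2 (Rw p d) (Nmod p d l) :=
  LinearEquiv.ofBijective (psi p d l N)
    ⟨Function.LeftInverse.injective (g := phibar p d l N hl) (left_inv p d l N hl),
      psi_surj p d l N hN⟩

end Stmt16Aux

namespace WittAux

variable (p : ℕ) [hp : Fact p.Prime] {k : Type*} [Field k] [CharP k p] [PerfectRing k p]

theorem card_quot' (n : ℕ) [Finite k] :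
    Nat.card (WittVector p k ⧸ Ideal.span {(p : WittVector p k) ^ n})
      = Nat.card k ^ n := by
  haveI := Fintype.ofFinite k
  have : Finite (TruncatedWittVector p n k) := by
    unfold TruncatedWittVector; infer_instance
  rw [Nat.card_congr (quotEquiv p n).toEquiv, Nat.card_eq_fintype_card,
    TruncatedWittVector.card, Nat.card_eq_fintype_card]

end WittAux

/-- Let `p` be a prime, `d ≥ 1`, `q = p^d`, `R = W(𝔽_q)`.  For every partition
`λ` (weakly decreasing, vanishing from index `N` on, `0`-based indexing `l i = λ_{i+1}`),
the second exterior power `⋀²_R N_λ` is a finite `R`-module of cardinality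
`q^{∑_j (j-1)λ_j}`. -/
theorem stmt_16 (p : ℕ) [Fact p.Prime] (d : ℕ) (hd : 1 ≤ d)
    (l : ℕ → ℕ) (hmono : ∀ i, l (i + 1) ≤ l i) (N : ℕ) (hN : ∀ i, N ≤ i → l i = 0) :
    Finite (Lambda2 (Rw p d) (Nmod p d l)) ∧
    Nat.card (Lambda2 (Rw p d) (Nmod p d l))
      = (p ^ d) ^ (∑ i ∈ Finset.range N, i * l i) := by
  have hanti : Antitone l := antitone_nat_of_succ_le hmono
  have hl : ∀ i j : ℕ, i ≤ j → l j ≤ l i := fun i j h => hanti h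
  have hQfin : ∀ j : ℕ, Finite (Stmt16Aux.Q p d l j) := fun j =>
    WittAux.finite_quot p (l j)
  have hQcard : ∀ j : ℕ, Nat.card (Stmt16Aux.Q p d l j) = (p ^ d) ^ (l j) := by
    intro j
    rw [WittAux.card_quot' p (l j), GaloisField.card p d (by omega), ← pow_mul]
  haveI : ∀ j : ℕ, Finite (Stmt16Aux.Q p d l j) := hQfin
  haveI hTfin : Finite (Stmt16Aux.T p d l N) := by
    unfold Stmt16Aux.T
    infer_instance
  have e := Stmt16Aux.equivTL p d l N hl hN
  constructor
  · exact Finite.of_equiv _ e.toEquiv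
  · rw [← Nat.card_congr e.toEquiv]
    rw [show Nat.card (Stmt16Aux.T p d l N)
        = ∏ j : Fin N, Nat.card (Fin (j : ℕ) → Stmt16Aux.Q p d l j) from Nat.card_pi]
    have hstep : ∀ j : Fin N,
        Nat.card (Fin (j : ℕ) → Stmt16Aux.Q p d l j) = ((p ^ d) ^ ((j : ℕ) * l j)) := by
      intro j
      rw [Nat.card_fun, hQcard, Nat.card_eq_fintype_card, Fintype.card_fin, ← pow_mul,
        mul_comm]
    rw [Finset.prod_congr rfl (fun j _ => hstep j), Finset.prod_pow_eq_pow_sum,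
      Fin.sum_univ_eq_sum_range (fun i => i * l i)]
end

section
/- Let p be a prime, let d be a positive integer, and let ε be an integer with −1 ≤ ε ≤ 1. Then the real number p^{(1−ε)d/2} equals d if and only if either (ε = 1 and d = 1) or (ε = 0, p = 2, and d = 2 or d = 4). -/
lemma aux_two_mul_lt_pow : ∀ m, 3 ≤ m → 2 * m < 2 ^ m := by
  intro m hm
  induction m with
  | zero => omega
  | succ n ih =>
    rcases Nat.lt_or_ge n 3 with h | h
    · interval_cases n <;> first | omega | norm_num
    · have := ih (by omega)
      rw [pow_succ]
      omega

lemma aux_eps0 (p : ℕ) (hp : p.Prime) (d : ℕ) (hd : 1 ≤ d) :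
    p ^ d = d ^ 2 ↔ p = 2 ∧ (d = 2 ∨ d = 4) := by
  constructor
  · intro h
    have hdvd : d ∣ p ^ d := h ▸ dvd_pow_self d two_ne_zero
    obtain ⟨m, hm, hdm⟩ := (Nat.dvd_prime_pow hp).mp hdvd
    have hpow : p ^ d = p ^ (2 * m) := by
      rw [h, hdm, ← pow_mul, mul_comm]
    have hd2m : d = 2 * m := Nat.pow_right_injective hp.two_le hpow
    have hpm : p ^ m = 2 * m := by rw [← hd2m, ← hdm]
    have hm3 : m < 3 := by
      by_contra hmge
      push_neg at hmge
      have h1 := aux_two_mul_lt_pow m hmge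
      have h2 : 2 ^ m ≤ p ^ m := Nat.pow_le_pow_left hp.two_le m
      omega
    interval_cases m
    · omega
    · simp at hpm; omega
    · have hp2 : p = 2 := by nlinarith [hp.two_le]
      omega
  · rintro ⟨rfl, h | h⟩ <;> subst h <;> norm_num

/-- For a prime `p`, a positive integer `d`, and `ε ∈ {-1,0,1}`,
the real number `p^((1-ε)d/2)` equals `d` if and only if
(`ε = 1` and `d = 1`) or (`ε = 0`, `p = 2`, and `d ∈ {2,4}`). -/
theorem stmt_17 (p : ℕ) (hp : p.Prime) (d : ℕ) (hd : 1 ≤ d) (ε : ℤ)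
    (hε₁ : -1 ≤ ε) (hε₂ : ε ≤ 1) :
    (p : ℝ) ^ (((1 - (ε : ℝ)) * (d : ℝ)) / 2) = (d : ℝ) ↔
      ((ε = 1 ∧ d = 1) ∨ (ε = 0 ∧ p = 2 ∧ (d = 2 ∨ d = 4))) := by
  have hp0 : (0:ℝ) ≤ p := by positivity
  interval_cases ε
  · -- ε = -1
    have he : ((1:ℝ) - ((-1 : ℤ) : ℝ)) * (d : ℝ) / 2 = ((d : ℕ) : ℝ) := by
      push_cast; ring
    rw [he, Real.rpow_natCast]
    constructor
    · intro h
      have h' : p ^ d = d := by exact_mod_cast h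
      have h1 : d < 2 ^ d := Nat.lt_two_pow_self
      have h2 : 2 ^ d ≤ p ^ d := Nat.pow_le_pow_left hp.two_le d
      omega
    · rintro (⟨h, -⟩ | ⟨h, -⟩) <;> omega
  · -- ε = 0
    have he : ((1:ℝ) - ((0 : ℤ) : ℝ)) * (d : ℝ) / 2 = (d : ℝ) / 2 := by
      push_cast; ring
    rw [he]
    have hsq : (p : ℝ) ^ ((d : ℝ) / 2) = (d : ℝ) ↔
        ((p : ℝ) ^ ((d : ℝ) / 2)) ^ 2 = (d : ℝ) ^ 2 := by
      constructor
      · intro h; rw [h]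
      · intro h
        have h1 : (0:ℝ) ≤ (p : ℝ) ^ ((d : ℝ) / 2) := Real.rpow_nonneg hp0 _
        have h2 : (0:ℝ) ≤ (d : ℝ) := by positivity
        nlinarith
    rw [hsq]
    have hexp : ((p : ℝ) ^ ((d : ℝ) / 2)) ^ 2 = ((p ^ d : ℕ) : ℝ) := by
      rw [← Real.rpow_natCast ((p:ℝ) ^ ((d:ℝ)/2)) 2, ← Real.rpow_mul hp0]
      push_cast
      norm_num
    rw [hexp]
    have : ((p ^ d : ℕ) : ℝ) = ((d : ℝ)) ^ 2 ↔ p ^ d = d ^ 2 := by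
      push_cast; constructor <;> intro h <;> exact_mod_cast h
    rw [this, aux_eps0 p hp d hd]
    simp
  · -- ε = 1
    norm_num [Real.rpow_natCast]
    constructor
    · intro h; exact_mod_cast h.symm
    · rintro rfl; norm_num
end
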